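/- arXiv:1703.06416 — 3 statements merged into one kernel-verified Lean document; each statement's English description precedes it below -/
import Mathlib

section
/- Passivity of the dual ascent subsystem (differential inequality form): let U(λ,ν) = (1/2)(‖λ-λ*‖² + ‖ν-ν*‖²) and suppose λ evolves by λ̇_j = η_j(λ_j, g_j(z̃)) (switch rule) and ν̇ = h(z̃), with g convex differentiable componentwise, h affine, λ(t) ≥ 0 for all t, and (z*, λ*, ν*) satisfying the KKT conditions (λ* ≥ 0, g(z*) ≤ 0, h(z*) = 0, λ*_j g_j(z*) = 0). Then at every time, dU/dt ≤ (∇g(z̃)ᵀλ - ∇g(z*)ᵀλ* + ∇h(z̃)ᵀν - ∇h(z*)ᵀν*)ᵀ (z̃ - z*). -/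
open scoped RealInnerProductSpace BigOperators

open Classical in
/-- The switch rule: `η(λⱼ,c) = 0` if `λⱼ = 0` and `c < 0`, else `c`. -/
noncomputable def eta (lam c : ℝ) : ℝ := if lam = 0 ∧ c < 0 then 0 else c

variable {E : Type*} [NormedAddCommGroup E] [InnerProductSpace ℝ E] [CompleteSpace E]

lemma grad_ineq (f : E → ℝ) (f' : E) (x y : E)
    (hc : ConvexOn ℝ Set.univ f) (hd : HasGradientAt f f' x) :
    f x + ⟪f', y - x⟫ ≤ f y := by
  set v := y - x with hv
  have h1 : HasDerivAt (fun t : ℝ => x + t • v) v 0 := by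
    simpa using ((hasDerivAt_id (0:ℝ)).smul_const v).const_add x
  have hφ : HasDerivAt (fun t : ℝ => f (x + t • v)) ⟪f', v⟫ 0 := by
    have hfd : HasFDerivAt f (InnerProductSpace.toDual ℝ E f') ((fun t : ℝ => x + t • v) 0) := by
      simpa using hasGradientAt_iff_hasFDerivAt.mp hd
    have hcomp := hfd.comp_hasDerivAt 0 h1
    simp at hcomp
    exact hcomp
  have hslope : ∀ t ∈ Set.Ioc (0:ℝ) 1,
      (f (x + t • v) - f x) / t ≤ f y - f x := by
    intro t ht
    have hxy : x + t • v = (1 - t) • x + t • y := by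
      rw [hv]; module
    have := hc.2 (Set.mem_univ x) (Set.mem_univ y)
      (by linarith [ht.2] : (0:ℝ) ≤ 1 - t) (le_of_lt ht.1) (by ring)
    rw [← hxy] at this
    simp only [smul_eq_mul] at this
    rw [div_le_iff₀ ht.1]
    nlinarith [this]
  have htend : Filter.Tendsto (fun t : ℝ => (f (x + t • v) - f x) / t)
      (nhdsWithin 0 (Set.Ioi 0)) (nhds ⟪f', v⟫) := by
    have := hφ.hasDerivWithinAt (s := Set.Ioi 0)
    have h2 := hasDerivWithinAt_iff_tendsto_slope.mp this
    have : Filter.Tendsto (slope (fun t : ℝ => f (x + t • v)) 0)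
        (nhdsWithin 0 (Set.Ioi 0)) (nhds ⟪f', v⟫) :=
      h2.mono_left (nhdsWithin_mono _ (by intro z hz; exact ⟨hz, ne_of_gt hz⟩))
    refine this.congr' ?_
    filter_upwards [self_mem_nhdsWithin] with t ht
    simp [slope, ht, div_eq_inv_mul]
  have : ⟪f', v⟫ ≤ f y - f x := by
    refine le_of_tendsto htend ?_
    filter_upwards [Icc_mem_nhdsGT_of_mem (by norm_num : (0:ℝ) ∈ Set.Ico 0 1),
      self_mem_nhdsWithin] with t ht ht'
    exact hslope t ⟨ht', ht.2⟩
  linarith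


/-- Passivity of the dual ascent subsystem (differential inequality form): with
`U = (1/2)(‖λ-λ*‖² + ‖ν-ν*‖²)`, `λ̇ⱼ = η(λⱼ, gⱼ(z̃))` and `ν̇ = h(z̃)`, `g` componentwise
convex differentiable, `h` affine, `λ ≥ 0`, and `(z*,λ*,ν*)` a KKT point,
`dU/dt = Σⱼ(λⱼ-λ*ⱼ)η(λⱼ,gⱼ(z̃)) + Σₗ(νₗ-ν*ₗ)hₗ(z̃)
  ≤ (∇g(z̃)ᵀλ - ∇g(z*)ᵀλ* + ∇h(z̃)ᵀν - ∇h(z*)ᵀν*)ᵀ(z̃-z*)`. -/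
theorem stmt_11 (N m p : ℕ)
    (g : EuclideanSpace ℝ (Fin N) → Fin m → ℝ)
    (G : EuclideanSpace ℝ (Fin N) → Fin m → EuclideanSpace ℝ (Fin N))
    (hgconv : ∀ j, ConvexOn ℝ Set.univ fun z => g z j)
    (hgdiff : ∀ j z, HasGradientAt (fun z => g z j) (G z j) z)
    (a : Fin p → EuclideanSpace ℝ (Fin N)) (cst : Fin p → ℝ)
    (h : EuclideanSpace ℝ (Fin N) → Fin p → ℝ)
    (haff : ∀ z l, h z l = ⟪a l, z⟫ + cst l)
    (zs zt : EuclideanSpace ℝ (Fin N))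
    (lam lams : Fin m → ℝ) (nu nus : Fin p → ℝ)
    (hlam : ∀ j, 0 ≤ lam j) (hlams : ∀ j, 0 ≤ lams j)
    (hfeas : ∀ j, g zs j ≤ 0) (heq : ∀ l, h zs l = 0)
    (hslack : ∀ j, lams j * g zs j = 0) :
    (∑ j, (lam j - lams j) * eta (lam j) (g zt j)) +
        (∑ l, (nu l - nus l) * h zt l) ≤
      ⟪(∑ j, lam j • G zt j) - (∑ j, lams j • G zs j) +
          ((∑ l, nu l • a l) - (∑ l, nus l • a l)), zt - zs⟫ := by
  have key : ∀ j, (lam j - lams j) * eta (lam j) (g zt j) ≤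
      ⟪lam j • G zt j, zt - zs⟫ - ⟪lams j • G zs j, zt - zs⟫ := by
    intro j
    have h1 := grad_ineq (fun z => g z j) (G zt j) zt zs (hgconv j) (hgdiff j zt)
    have h2 := grad_ineq (fun z => g z j) (G zs j) zs zt (hgconv j) (hgdiff j zs)
    have hflip : ⟪G zt j, zs - zt⟫ = -⟪G zt j, zt - zs⟫ := by
      rw [← inner_neg_right]; congr 1; abel
    rw [hflip] at h1
    have hgt : g zt j ≤ ⟪G zt j, zt - zs⟫ := by linarith [hfeas j]
    have hgs : ⟪G zs j, zt - zs⟫ ≤ g zt j - g zs j := by linarith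
    have step1 : (lam j - lams j) * eta (lam j) (g zt j) ≤ (lam j - lams j) * g zt j := by
      unfold eta; split_ifs with hcond
      · rw [mul_zero, hcond.1]
        nlinarith [hlams j, hcond.2]
      · exact le_refl _
    have step2 : lam j * g zt j ≤ lam j * ⟪G zt j, zt - zs⟫ :=
      mul_le_mul_of_nonneg_left hgt (hlam j)
    have step3 : lams j * ⟪G zs j, zt - zs⟫ ≤ lams j * g zt j := by
      nlinarith [mul_le_mul_of_nonneg_left hgs (hlams j), hslack j]
    rw [real_inner_smul_left, real_inner_smul_left]
    linarith
  have nukey : ∀ l, (nu l - nus l) * h zt l =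
      ⟪nu l • a l, zt - zs⟫ - ⟪nus l • a l, zt - zs⟫ := by
    intro l
    have h0 := heq l
    rw [haff zs l] at h0
    rw [haff zt l, real_inner_smul_left, real_inner_smul_left, inner_sub_right]
    have hc : cst l = -⟪a l, zs⟫ := by linarith
    rw [hc]; ring
  calc (∑ j, (lam j - lams j) * eta (lam j) (g zt j)) +
        (∑ l, (nu l - nus l) * h zt l)
      ≤ (∑ j, (⟪lam j • G zt j, zt - zs⟫ - ⟪lams j • G zs j, zt - zs⟫)) +
        (∑ l, (⟪nu l • a l, zt - zs⟫ - ⟪nus l • a l, zt - zs⟫)) := by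
        exact add_le_add (Finset.sum_le_sum fun j _ => key j)
          (le_of_eq (Finset.sum_congr rfl fun l _ => nukey l))
    _ = _ := by
        rw [inner_add_left, inner_sub_left, inner_sub_left, sum_inner, sum_inner,
          sum_inner, sum_inner, Finset.sum_sub_distrib, Finset.sum_sub_distrib]
end

section
/- The gradient descent/PI-consensus subsystem is passive: for the system ż̃ = -Lz̃ + Lζ - αφ(z̃) + u, ζ̇ = -Lz̃, with L symmetric positive semidefinite, α ≥ 0, and φ = ∇f the gradient of a convex function f, the storage function S(z̃,ζ) = (1/2)‖z̃ - z̃*‖² + (1/2)‖ζ - ζ*‖² satisfies Ṡ ≤ (u - u*)ᵀ(z̃ - z̃*), where (z̃*, ζ*) is an equilibrium for constant input u* (i.e., -Lz̃* + Lζ* - αφ(z̃*) + u* = 0 and Lz̃* = 0). -/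
open scoped RealInnerProductSpace

lemma first_order_aux {M : ℕ} {f : EuclideanSpace ℝ (Fin M) → ℝ}
    (hconv : ConvexOn ℝ Set.univ f)
    {φ : EuclideanSpace ℝ (Fin M) → EuclideanSpace ℝ (Fin M)}
    (hgrad : ∀ x, HasGradientAt f (φ x) x)
    (x y : EuclideanSpace ℝ (Fin M)) :
    ⟪φ x, y - x⟫ ≤ f y - f x := by
  set g : ℝ → ℝ := fun t => f (x + t • (y - x)) with hg
  have hgc : ConvexOn ℝ Set.univ g := by
    have := hconv.comp_affineMap (AffineMap.lineMap x y)
    simp only [Set.preimage_univ] at this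
    have e : g = f ∘ AffineMap.lineMap x y := by
      funext t
      simp [hg, AffineMap.lineMap_apply, add_comm]
    rw [e]; exact this
  have hder : HasDerivAt g ⟪φ x, y - x⟫ 0 := by
    have h1 : HasDerivAt (fun t : ℝ => x + t • (y - x)) (y - x) 0 := by
      simpa using ((hasDerivAt_id (0:ℝ)).smul_const (y - x)).const_add x
    have h2 := ((hgrad (x + (0:ℝ) • (y - x))).hasFDerivAt.comp_hasDerivAt 0 h1)
    simp [hg] at h2
    exact h2
  have := hgc.le_slope_of_hasDerivAt (Set.mem_univ (0:ℝ)) (Set.mem_univ (1:ℝ)) one_pos hder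
  simpa [slope, hg] using this

lemma grad_mono_aux {M : ℕ} {f : EuclideanSpace ℝ (Fin M) → ℝ}
    (hconv : ConvexOn ℝ Set.univ f)
    {φ : EuclideanSpace ℝ (Fin M) → EuclideanSpace ℝ (Fin M)}
    (hgrad : ∀ x, HasGradientAt f (φ x) x)
    (x y : EuclideanSpace ℝ (Fin M)) :
    0 ≤ ⟪y - x, φ y - φ x⟫ := by
  have h1 := first_order_aux hconv hgrad x y
  have h2 := first_order_aux hconv hgrad y x
  have h3 : ⟪φ y, x - y⟫ = -⟪φ y, y - x⟫ := by
    rw [← inner_neg_right]; congr 1; abel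
  rw [real_inner_comm, inner_sub_left]
  rw [h3] at h2
  linarith


/-- Passivity of the gradient descent / PI-consensus subsystem: for
`ż = -Lz + Lζ - αφ(z) + u`, `ζ̇ = -Lz`, with `L` symmetric PSD (as the self-adjoint
PSD operator `T`), `α ≥ 0`, `φ = ∇f` for a convex `f`, and `(z*,ζ*)` an equilibrium
for the constant input `u*`, the storage `S = (1/2)‖z-z*‖² + (1/2)‖ζ-ζ*‖²` satisfies
`Ṡ = ⟪z-z*, ż⟫ + ⟪ζ-ζ*, ζ̇⟫ ≤ ⟪u-u*, z-z*⟫`. -/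
theorem stmt_12 (M : ℕ)
    (T : EuclideanSpace ℝ (Fin M) →ₗ[ℝ] EuclideanSpace ℝ (Fin M))
    (hsym : ∀ x y, ⟪T x, y⟫ = ⟪x, T y⟫)
    (hpsd : ∀ x, 0 ≤ ⟪x, T x⟫)
    (α : ℝ) (hα : 0 ≤ α)
    (f : EuclideanSpace ℝ (Fin M) → ℝ) (hconv : ConvexOn ℝ Set.univ f)
    (φ : EuclideanSpace ℝ (Fin M) → EuclideanSpace ℝ (Fin M))
    (hgrad : ∀ x, HasGradientAt f (φ x) x)
    (zs ζs us : EuclideanSpace ℝ (Fin M))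
    (heq : -T zs + T ζs - α • φ zs + us = 0) (heq2 : T zs = 0) :
    ∀ z ζ u : EuclideanSpace ℝ (Fin M),
      ⟪z - zs, -T z + T ζ - α • φ z + u⟫ + ⟪ζ - ζs, -(T z)⟫ ≤ ⟪u - us, z - zs⟫ := by
  intro z ζ u
  have hus : us = T zs - T ζs + α • φ zs := by
    apply eq_of_sub_eq_zero
    rw [← heq]; abel
  have hTz : T z = T (z - zs) := by rw [map_sub, heq2, sub_zero]
  have hsym' : ⟪z - zs, T (ζ - ζs)⟫ = ⟪ζ - ζs, T (z - zs)⟫ := by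
    rw [← hsym]; exact real_inner_comm _ _
  have hmono := grad_mono_aux hconv hgrad zs z
  have hpsd' := hpsd (z - zs)
  have main : ⟪z - zs, -T z + T ζ - α • φ z + u⟫ + ⟪ζ - ζs, -(T z)⟫
      = ⟪u - us, z - zs⟫ - ⟪z - zs, T (z - zs)⟫ - α * ⟪z - zs, φ z - φ zs⟫
        + (⟪z - zs, T (ζ - ζs)⟫ - ⟪ζ - ζs, T (z - zs)⟫) := by
    rw [hus, hTz]
    simp only [map_sub, map_add, heq2, inner_sub_left, inner_sub_right, inner_add_left,
      inner_add_right, inner_neg_left, inner_neg_right, real_inner_smul_left,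
      real_inner_smul_right, zero_sub, sub_zero, inner_zero_left, inner_zero_right]
    rw [real_inner_comm u z, real_inner_comm u zs, real_inner_comm (T ζs) z,
        real_inner_comm (T ζs) zs, real_inner_comm (φ zs) z, real_inner_comm (φ zs) zs]
    ring
  rw [main, hsym']
  nlinarith
end

section
/- For the shifted closed-loop system d/dt(q_m, ξ) = (-(L̄ + α D̄)q_m + L̄ξ, -L̄q_m) with L̄ the Laplacian of a connected graph (tensored with I₂), D̄ the leader-selection diagonal matrix with at least one leader, and α > 0, the only trajectory along which V(q_m,ξ) = (1/2)‖q_m‖² + (1/2)‖ξ‖² is constant and contained in {(q_m,ξ) : V̇ = 0} with invariance satisfies q_m = 0; consequently q_m(t) → 0, i.e., all robot positions converge to the (biased) reference. -/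
set_option linter.unusedSectionVars false
set_option linter.unusedVariables false
set_option maxHeartbeats 1200000

open Matrix Filter
open scoped Kronecker

section aux
variable {ι : Type*} [Fintype ι] [DecidableEq ι]

lemma aux_dp_self_nonneg (x : ι → ℝ) : 0 ≤ x ⬝ᵥ x :=
  Finset.sum_nonneg fun i _ => mul_self_nonneg _

lemma aux_dp_self_pos {x : ι → ℝ} (hx : x ≠ 0) : 0 < x ⬝ᵥ x := by
  rcases (aux_dp_self_nonneg x).lt_or_eq with h | h
  · exact h
  · exact absurd (funext fun i => mul_self_eq_zero.mp
      ((Finset.sum_eq_zero_iff_of_nonneg (fun i _ => mul_self_nonneg (x i))).1 h.symm i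
        (Finset.mem_univ i))) hx

lemma aux_cont_quad (A : Matrix ι ι ℝ) :
    Continuous (fun x : ι → ℝ => x ⬝ᵥ (A *ᵥ x)) := by
  unfold dotProduct Matrix.mulVec
  exact continuous_finset_sum _ fun i _ =>
    (continuous_apply i).mul (continuous_finset_sum _ fun j _ =>
      continuous_const.mul (continuous_apply j))

lemma aux_hom_quad (A : Matrix ι ι ℝ) (r : ℝ) (x : ι → ℝ) :
    (r • x) ⬝ᵥ (A *ᵥ (r • x)) = r ^ 2 * (x ⬝ᵥ (A *ᵥ x)) := by
  rw [Matrix.mulVec_smul, smul_dotProduct, dotProduct_smul]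
  simp [smul_smul, sq, smul_eq_mul, mul_assoc]

lemma aux_sphere :
    IsCompact {x : ι → ℝ | x ⬝ᵥ x = 1} ∧ (Nonempty ι → {x : ι → ℝ | x ⬝ᵥ x = 1}.Nonempty) := by
  constructor
  · have hcont : Continuous (fun x : ι → ℝ => x ⬝ᵥ x) := by
      have := aux_cont_quad (1 : Matrix ι ι ℝ)
      simpa [Matrix.one_mulVec] using this
    have hclosed : IsClosed {x : ι → ℝ | x ⬝ᵥ x = 1} :=
      isClosed_eq hcont continuous_const
    refine (isCompact_closedBall (0 : ι → ℝ) 1).of_isClosed_subset hclosed ?_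
    intro x hx
    simp only [Metric.mem_closedBall, dist_zero_right]
    refine (pi_norm_le_iff_of_nonneg zero_le_one).2 fun i => ?_
    rw [Real.norm_eq_abs, abs_le_one_iff_mul_self_le_one]
    calc x i * x i ≤ x ⬝ᵥ x :=
          Finset.single_le_sum (fun j _ => mul_self_nonneg (x j)) (Finset.mem_univ i)
      _ = 1 := hx
  · rintro ⟨i₀⟩
    refine ⟨Pi.single i₀ 1, ?_⟩
    simp only [Set.mem_setOf_eq, dotProduct]
    rw [Finset.sum_eq_single i₀]
    · simp
    · intro j _ hj; simp [Pi.single_eq_of_ne hj]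
    · simp

lemma aux_scale {x : ι → ℝ} (hx : x ≠ 0) :
    ∃ r > (0:ℝ), ∃ y : ι → ℝ, y ⬝ᵥ y = 1 ∧ x = r • y ∧ r ^ 2 = x ⬝ᵥ x := by
  have hpos : 0 < x ⬝ᵥ x := aux_dp_self_pos hx
  refine ⟨Real.sqrt (x ⬝ᵥ x), Real.sqrt_pos.2 hpos, (Real.sqrt (x ⬝ᵥ x))⁻¹ • x, ?_, ?_, ?_⟩
  · have h1 := aux_hom_quad (1 : Matrix ι ι ℝ) (Real.sqrt (x ⬝ᵥ x))⁻¹ x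
    simp only [Matrix.one_mulVec] at h1
    rw [h1, inv_pow, Real.sq_sqrt hpos.le, inv_mul_cancel₀ hpos.ne']
  · rw [smul_smul, mul_inv_cancel₀ (Real.sqrt_pos.2 hpos).ne', one_smul]
  · exact Real.sq_sqrt hpos.le

lemma aux_matrix_quad_upper [Nonempty ι] (B : Matrix ι ι ℝ) :
    ∃ C : ℝ, ∀ x : ι → ℝ, x ⬝ᵥ (B *ᵥ x) ≤ C * (x ⬝ᵥ x) := by
  obtain ⟨hK, hne⟩ := (aux_sphere (ι := ι))
  obtain ⟨x₀, hx₀, hmax⟩ := hK.exists_isMaxOn (hne ‹_›) (aux_cont_quad B).continuousOn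
  refine ⟨x₀ ⬝ᵥ (B *ᵥ x₀), fun x => ?_⟩
  by_cases hx : x = 0
  · subst hx; simp
  · obtain ⟨r, hr, y, hy1, hxy, hr2⟩ := aux_scale hx
    have h1 : y ⬝ᵥ (B *ᵥ y) ≤ x₀ ⬝ᵥ (B *ᵥ x₀) := hmax hy1
    calc x ⬝ᵥ (B *ᵥ x) = r ^ 2 * (y ⬝ᵥ (B *ᵥ y)) := by rw [hxy, aux_hom_quad]
      _ ≤ r ^ 2 * (x₀ ⬝ᵥ (B *ᵥ x₀)) := mul_le_mul_of_nonneg_left h1 (sq_nonneg r)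
      _ = (x₀ ⬝ᵥ (B *ᵥ x₀)) * (x ⬝ᵥ x) := by rw [← hr2]; ring

lemma aux_matrix_quad_lower [Nonempty ι] (B : Matrix ι ι ℝ)
    (hpos : ∀ x : ι → ℝ, x ≠ 0 → 0 < x ⬝ᵥ (B *ᵥ x)) :
    ∃ c > (0:ℝ), ∀ x : ι → ℝ, c * (x ⬝ᵥ x) ≤ x ⬝ᵥ (B *ᵥ x) := by
  obtain ⟨hK, hne⟩ := (aux_sphere (ι := ι))
  obtain ⟨x₀, hx₀, hmin⟩ := hK.exists_isMinOn (hne ‹_›) (aux_cont_quad B).continuousOn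
  have hx₀ne : x₀ ≠ 0 := by
    intro h; rw [Set.mem_setOf_eq, h] at hx₀; simp at hx₀
  refine ⟨x₀ ⬝ᵥ (B *ᵥ x₀), hpos x₀ hx₀ne, fun x => ?_⟩
  by_cases hx : x = 0
  · subst hx; simp
  · obtain ⟨r, hr, y, hy1, hxy, hr2⟩ := aux_scale hx
    have h1 : x₀ ⬝ᵥ (B *ᵥ x₀) ≤ y ⬝ᵥ (B *ᵥ y) := hmin hy1
    calc (x₀ ⬝ᵥ (B *ᵥ x₀)) * (x ⬝ᵥ x) = r ^ 2 * (x₀ ⬝ᵥ (B *ᵥ x₀)) := by rw [← hr2]; ring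
      _ ≤ r ^ 2 * (y ⬝ᵥ (B *ᵥ y)) := mul_le_mul_of_nonneg_left h1 (sq_nonneg r)
      _ = x ⬝ᵥ (B *ᵥ x) := by rw [hxy, aux_hom_quad]

lemma aux_cs (u v : ι → ℝ) : (u ⬝ᵥ v) ^ 2 ≤ (u ⬝ᵥ u) * (v ⬝ᵥ v) := by
  have h := Finset.sum_mul_sq_le_sq_mul_sq Finset.univ u v
  simpa [dotProduct, sq] using h

end aux

lemma aux_kron_quad {m : ℕ} (A : Matrix (Fin m) (Fin m) ℝ) (x : Fin m × Fin 2 → ℝ) :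
    x ⬝ᵥ ((A ⊗ₖ (1 : Matrix (Fin 2) (Fin 2) ℝ)) *ᵥ x)
      = ∑ k : Fin 2, (fun i => x (i, k)) ⬝ᵥ (A *ᵥ fun i => x (i, k)) := by
  simp only [dotProduct, Matrix.mulVec, Matrix.kroneckerMap_apply, Matrix.one_apply,
    Fintype.sum_prod_type, Matrix.kronecker_apply]
  rw [Finset.sum_comm]
  refine Finset.sum_congr rfl fun k _ => Finset.sum_congr rfl fun i _ => ?_
  congr 1
  rw [Finset.sum_comm]
  simp [mul_ite, ite_mul, Finset.sum_ite_eq]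

lemma aux_kron_symm {m : ℕ} (A : Matrix (Fin m) (Fin m) ℝ) (hA : A.IsSymm)
    (x y : Fin m × Fin 2 → ℝ) :
    x ⬝ᵥ ((A ⊗ₖ (1 : Matrix (Fin 2) (Fin 2) ℝ)) *ᵥ y)
      = y ⬝ᵥ ((A ⊗ₖ (1 : Matrix (Fin 2) (Fin 2) ℝ)) *ᵥ x) := by
  have hsym : (A ⊗ₖ (1 : Matrix (Fin 2) (Fin 2) ℝ))ᵀ = A ⊗ₖ (1 : Matrix (Fin 2) (Fin 2) ℝ) := by
    rw [← Matrix.kroneckerMap_transpose, Matrix.transpose_one, hA.eq]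
  rw [Matrix.dotProduct_mulVec, ← Matrix.mulVec_transpose, hsym, dotProduct_comm]

lemma aux_mulVec_sq {ι : Type*} [Fintype ι] (A : Matrix ι ι ℝ) (x : ι → ℝ) :
    (A *ᵥ x) ⬝ᵥ (A *ᵥ x) = x ⬝ᵥ ((Aᵀ * A) *ᵥ x) := by
  rw [← Matrix.mulVec_mulVec, Matrix.dotProduct_mulVec x, ← Matrix.mulVec_transpose,
    Matrix.transpose_transpose]

lemma aux_dp_add_sq {ι : Type*} [Fintype ι] (u v : ι → ℝ) :
    (u + v) ⬝ᵥ (u + v) ≤ 2 * (u ⬝ᵥ u) + 2 * (v ⬝ᵥ v) := by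
  simp only [dotProduct, ← Finset.sum_add_distrib, Finset.mul_sum] at *
  rw [← sub_nonneg, ← Finset.sum_sub_distrib]
  refine Finset.sum_nonneg fun i _ => ?_
  have := mul_self_nonneg (u i - v i)
  simp only [Pi.add_apply]
  nlinarith [this]

lemma aux_deriv_dp {ι : Type*} [Fintype ι] {u v : ℝ → ι → ℝ} {u' v' : ι → ℝ} {t : ℝ}
    (hu : HasDerivAt u u' t) (hv : HasDerivAt v v' t) :
    HasDerivAt (fun s => u s ⬝ᵥ v s) (u' ⬝ᵥ v t + u t ⬝ᵥ v') t := by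
  have h : ∀ i ∈ Finset.univ, HasDerivAt (fun s => u s i * v s i)
      (u' i * v t i + u t i * v' i) t :=
    fun i _ => (hasDerivAt_pi.mp hu i).mul (hasDerivAt_pi.mp hv i)
  have hsum := HasDerivAt.fun_sum h
  simpa [dotProduct, Finset.sum_add_distrib] using hsum

lemma aux_barbalat {g : ℝ → ℝ} {K B : ℝ} (hK : 0 < K)
    (hg0 : ∀ t, 0 ≤ g t) (hgc : Continuous g)
    (hlip : ∀ t s : ℝ, 0 ≤ t → t ≤ s → g t - K * (s - t) ≤ g s)
    (hint : ∀ t, 0 ≤ t → ∫ s in (0:ℝ)..t, g s ≤ B) :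
    Tendsto g atTop (nhds 0) := by
  set Gg : ℝ → ℝ := fun t => ∫ s in (0:ℝ)..t, g s with hGg
  have hgi : ∀ a b : ℝ, IntervalIntegrable g MeasureTheory.volume a b :=
    fun a b => hgc.intervalIntegrable a b
  have hdiff : ∀ a b : ℝ, Gg b - Gg a = ∫ s in a..b, g s := by
    intro a b
    rw [hGg]
    simp only
    rw [← intervalIntegral.integral_add_adjacent_intervals (hgi 0 a) (hgi a b)]
    ring
  have hmono : Monotone Gg := by
    intro a b hab
    have h1 : 0 ≤ ∫ s in a..b, g s :=
      intervalIntegral.integral_nonneg hab (fun s _ => hg0 s)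
    linarith [hdiff a b]
  have hB0 : (0:ℝ) ≤ B := by simpa using hint 0 le_rfl
  have hbdd : BddAbove (Set.range Gg) := by
    refine ⟨B, ?_⟩
    rintro _ ⟨t, rfl⟩
    rcases le_or_gt 0 t with h | h
    · exact hint t h
    · calc Gg t ≤ Gg 0 := hmono h.le
        _ ≤ B := by simpa [hGg] using hB0
  set S : ℝ := ⨆ t, Gg t with hS
  have htend : Tendsto Gg atTop (nhds S) := tendsto_atTop_ciSup hmono hbdd
  have hle : ∀ t, Gg t ≤ S := fun t => le_ciSup hbdd t
  rw [Metric.tendsto_atTop]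
  intro ε hε
  have hη : (0:ℝ) < ε ^ 2 / (2 * K) := by positivity
  have hev : ∀ᶠ t in atTop, S - Gg t < ε ^ 2 / (2 * K) := by
    have := htend (Metric.ball_mem_nhds S hη)
    filter_upwards [this] with t ht
    rw [Set.mem_preimage, Metric.mem_ball, Real.dist_eq, abs_lt] at ht
    linarith [ht.1]
  obtain ⟨T, hT⟩ := (hev.and (eventually_ge_atTop (0:ℝ))).exists_forall_of_atTop
  refine ⟨T, fun t ht => ?_⟩
  obtain ⟨hT1, hT2⟩ := hT t ht
  set d : ℝ := g t / K with hd
  have hd0 : 0 ≤ d := div_nonneg (hg0 t) hK.le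
  have hkey : g t ^ 2 / (2 * K) ≤ Gg (t + d) - Gg t := by
    rw [hdiff t (t + d)]
    have hlin : ∀ s : ℝ, HasDerivAt (fun s => g t * (s - t) - K * (s - t) ^ 2 / 2)
        (g t - K * (s - t)) s := by
      intro s
      have h1 : HasDerivAt (fun s : ℝ => s - t) 1 s := (hasDerivAt_id s).sub_const t
      have h2 := (h1.const_mul (g t))
      have h3 := ((h1.pow 2).const_mul K).div_const 2
      have h4 := h2.sub h3
      refine (h4.congr_deriv (by push_cast; ring)).congr_of_eventuallyEq
        (Filter.Eventually.of_forall fun y => ?_)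
      simp
    have hctf : Continuous (fun s : ℝ => g t - K * (s - t)) := by fun_prop
    have hint2 : IntervalIntegrable (fun s : ℝ => g t - K * (s - t))
        MeasureTheory.volume t (t + d) := hctf.intervalIntegrable _ _
    have heval := intervalIntegral.integral_eq_sub_of_hasDerivAt
      (f := fun s => g t * (s - t) - K * (s - t) ^ 2 / 2)
      (f' := fun s => g t - K * (s - t)) (a := t) (b := t + d)
      (fun s _ => hlin s) hint2
    have heval2 : (∫ s in t..(t + d), (g t - K * (s - t))) = g t ^ 2 / (2 * K) := by
      rw [heval, hd]
      field_simp
      ring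
    rw [← heval2]
    refine intervalIntegral.integral_mono_on (by linarith) hint2
      (hgi t (t + d)) fun s hs => ?_
    exact hlip t s hT2 hs.1
  have h2 : Gg (t + d) - Gg t ≤ S - Gg t := by linarith [hle (t + d)]
  have h3 : g t ^ 2 / (2 * K) < ε ^ 2 / (2 * K) := by linarith
  have h4 : g t ^ 2 < ε ^ 2 := by
    have := (div_lt_div_iff_of_pos_right (by positivity : (0:ℝ) < 2 * K)).1 h3
    linarith
  have h5 : g t < ε := by
    by_contra hcon
    push_neg at hcon
    nlinarith [hg0 t]
  rw [Real.dist_eq, abs_of_nonneg (by linarith [hg0 t] : (0:ℝ) ≤ g t - 0)]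
  simpa using h5

lemma aux_posdef (n : ℕ) (G : SimpleGraph (Fin n)) [DecidableRel G.Adj]
    (hG : G.Connected) (δ : Fin n → ℝ) (hδ : ∀ i, δ i = 0 ∨ δ i = 1)
    (hleader : ∃ i, δ i = 1) (α : ℝ) (hα : 0 < α) :
    ∀ x : Fin n × Fin 2 → ℝ, x ≠ 0 →
      0 < x ⬝ᵥ (((G.lapMatrix ℝ ⊗ₖ (1 : Matrix (Fin 2) (Fin 2) ℝ)) +
          α • (Matrix.diagonal δ ⊗ₖ (1 : Matrix (Fin 2) (Fin 2) ℝ))) *ᵥ x) := by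
  intro x hx
  have hδ0 : ∀ i, 0 ≤ δ i := fun i => by rcases hδ i with h | h <;> rw [h] <;> norm_num
  have hLpsd : ∀ y : Fin n → ℝ, 0 ≤ y ⬝ᵥ (G.lapMatrix ℝ *ᵥ y) := fun y => by
    simpa using (SimpleGraph.posSemidef_lapMatrix ℝ G).dotProduct_mulVec_nonneg y
  have hLzero : ∀ y : Fin n → ℝ, y ⬝ᵥ (G.lapMatrix ℝ *ᵥ y) = 0 → ∀ i j, y i = y j := by
    intro y hy i j
    have h1 : Matrix.toLinearMap₂' ℝ (G.lapMatrix ℝ) y y = 0 := by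
      rw [Matrix.toLinearMap₂'_apply']; exact hy
    exact (G.lapMatrix_toLinearMap₂'_apply'_eq_zero_iff_forall_reachable y).1 h1 i j
      (hG.preconnected i j)
  rw [Matrix.add_mulVec, dotProduct_add, Matrix.smul_mulVec,
    dotProduct_smul, smul_eq_mul, aux_kron_quad, aux_kron_quad, Finset.mul_sum,
    ← Finset.sum_add_distrib]
  have hDval : ∀ y : Fin n → ℝ, y ⬝ᵥ (Matrix.diagonal δ *ᵥ y) = ∑ i, δ i * (y i * y i) := by
    intro y
    simp only [dotProduct, Matrix.mulVec_diagonal]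
    exact Finset.sum_congr rfl fun i _ => by ring
  have hDnn : ∀ y : Fin n → ℝ, 0 ≤ y ⬝ᵥ (Matrix.diagonal δ *ᵥ y) := by
    intro y
    rw [hDval]
    exact Finset.sum_nonneg fun i _ => mul_nonneg (hδ0 i) (mul_self_nonneg _)
  obtain ⟨⟨i0, k0⟩, hx0⟩ := Function.ne_iff.1 hx
  refine Finset.sum_pos' (fun k _ => add_nonneg (hLpsd _) (mul_nonneg hα.le (hDnn _)))
    ⟨k0, Finset.mem_univ k0, ?_⟩
  set y : Fin n → ℝ := fun i => x (i, k0) with hy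
  have hy0 : y i0 ≠ 0 := hx0
  rcases (hLpsd y).lt_or_eq with hL | hL
  · have := mul_nonneg hα.le (hDnn y)
    linarith
  · have hconst := hLzero y hL.symm
    obtain ⟨i1, hi1⟩ := hleader
    have hD : 0 < y ⬝ᵥ (Matrix.diagonal δ *ᵥ y) := by
      rw [hDval]
      refine Finset.sum_pos' (fun i _ => mul_nonneg (hδ0 i) (mul_self_nonneg _))
        ⟨i1, Finset.mem_univ i1, ?_⟩
      rw [hi1, one_mul]
      have h5 : y i1 = y i0 := hconst i1 i0
      rw [h5]
      exact mul_self_pos.2 hy0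
    nlinarith

/-- Convergence of the shifted closed-loop system: for
`d/dt (q_m, ξ) = (-(L̄ + αD̄)q_m + L̄ξ, -L̄q_m)` with `L̄ = L ⊗ I₂` the Laplacian of a
connected graph tensored with `I₂`, `D̄ = D ⊗ I₂` the leader-selection diagonal matrix
(`δᵢ ∈ {0,1}` with at least one leader) and `α > 0`, every trajectory satisfies
`q_m(t) → 0`, i.e. all robot positions converge to the (biased) reference. -/
theorem stmt_19 (n : ℕ) (G : SimpleGraph (Fin n)) [DecidableRel G.Adj]
    (hG : G.Connected) (δ : Fin n → ℝ) (hδ : ∀ i, δ i = 0 ∨ δ i = 1)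
    (hleader : ∃ i, δ i = 1) (α : ℝ) (hα : 0 < α)
    (q ξ : ℝ → (Fin n × Fin 2 → ℝ))
    (hq : ∀ t, HasDerivAt q
      (-(((G.lapMatrix ℝ ⊗ₖ (1 : Matrix (Fin 2) (Fin 2) ℝ)) +
            α • (Matrix.diagonal δ ⊗ₖ (1 : Matrix (Fin 2) (Fin 2) ℝ))) *ᵥ q t) +
        (G.lapMatrix ℝ ⊗ₖ (1 : Matrix (Fin 2) (Fin 2) ℝ)) *ᵥ ξ t) t)
    (hξ : ∀ t, HasDerivAt ξ
      (-((G.lapMatrix ℝ ⊗ₖ (1 : Matrix (Fin 2) (Fin 2) ℝ)) *ᵥ q t)) t) :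
    Tendsto q atTop (nhds 0) := by
  obtain ⟨iL, hiL⟩ := hleader
  haveI : Nonempty (Fin n) := ⟨iL⟩
  haveI : Nonempty (Fin n × Fin 2) := ⟨(iL, 0)⟩
  set Lb : Matrix (Fin n × Fin 2) (Fin n × Fin 2) ℝ :=
    G.lapMatrix ℝ ⊗ₖ (1 : Matrix (Fin 2) (Fin 2) ℝ) with hLb
  set Db : Matrix (Fin n × Fin 2) (Fin n × Fin 2) ℝ :=
    Matrix.diagonal δ ⊗ₖ (1 : Matrix (Fin 2) (Fin 2) ℝ) with hDb
  set M : Matrix (Fin n × Fin 2) (Fin n × Fin 2) ℝ := Lb + α • Db with hM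
  have hpos : ∀ x : Fin n × Fin 2 → ℝ, x ≠ 0 → 0 < x ⬝ᵥ (M *ᵥ x) := by
    rw [hM, hLb, hDb]
    exact aux_posdef n G hG δ hδ ⟨iL, hiL⟩ α hα
  have hnn : ∀ x, 0 ≤ x ⬝ᵥ (M *ᵥ x) := fun x => by
    by_cases h : x = 0
    · subst h; simp
    · exact (hpos x h).le
  have hsymm : ∀ u v : Fin n × Fin 2 → ℝ, u ⬝ᵥ (Lb *ᵥ v) = v ⬝ᵥ (Lb *ᵥ u) := by
    intro u v
    rw [hLb]
    exact aux_kron_symm _ (G.isSymm_lapMatrix ℝ) u v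
  obtain ⟨c, hc, hclow⟩ := aux_matrix_quad_lower M hpos
  obtain ⟨CM, hCM⟩ := aux_matrix_quad_upper (Mᵀ * M)
  obtain ⟨CL, hCL⟩ := aux_matrix_quad_upper (Lbᵀ * Lb)
  set CM' : ℝ := max CM 0 with hCM'def
  set CL' : ℝ := max CL 0 with hCL'def
  have hCM' : ∀ x, (M *ᵥ x) ⬝ᵥ (M *ᵥ x) ≤ CM' * (x ⬝ᵥ x) := fun x => by
    rw [aux_mulVec_sq]
    exact (hCM x).trans (mul_le_mul_of_nonneg_right (le_max_left _ _) (aux_dp_self_nonneg x))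
  have hCL' : ∀ x, (Lb *ᵥ x) ⬝ᵥ (Lb *ᵥ x) ≤ CL' * (x ⬝ᵥ x) := fun x => by
    rw [aux_mulVec_sq]
    exact (hCL x).trans (mul_le_mul_of_nonneg_right (le_max_left _ _) (aux_dp_self_nonneg x))
  have hCM0 : (0:ℝ) ≤ CM' := le_max_right _ _
  have hCL0 : (0:ℝ) ≤ CL' := le_max_right _ _
  have hqc : Continuous q := continuous_iff_continuousAt.2 fun t => (hq t).continuousAt
  have hξc : Continuous ξ := continuous_iff_continuousAt.2 fun t => (hξ t).continuousAt
  set qd : ℝ → (Fin n × Fin 2 → ℝ) := fun t => -(M *ᵥ q t) + Lb *ᵥ ξ t with hqd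
  have hq' : ∀ t, HasDerivAt q (qd t) t := fun t => hq t
  set E : ℝ → ℝ := fun t => (q t ⬝ᵥ q t + ξ t ⬝ᵥ ξ t) / 2 with hE
  set φ : ℝ → ℝ := fun t => q t ⬝ᵥ (M *ᵥ q t) with hφ
  set g : ℝ → ℝ := fun t => q t ⬝ᵥ q t with hg
  -- energy derivative
  have hE' : ∀ t, HasDerivAt E (-(φ t)) t := by
    intro t
    have h1 := aux_deriv_dp (hq' t) (hq' t)
    have h2 := aux_deriv_dp (hξ t) (hξ t)
    have h3 := (h1.add h2).div_const 2
    have e3 : q t ⬝ᵥ qd t = -(φ t) + q t ⬝ᵥ (Lb *ᵥ ξ t) := by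
      simp only [hqd, hφ, dotProduct_add, dotProduct_neg]
    have e4 : ξ t ⬝ᵥ (-(Lb *ᵥ q t)) = -(q t ⬝ᵥ (Lb *ᵥ ξ t)) := by
      rw [dotProduct_neg, hsymm]
    have e1 : qd t ⬝ᵥ q t = q t ⬝ᵥ qd t := dotProduct_comm _ _
    have e2 : (-(Lb *ᵥ q t)) ⬝ᵥ ξ t = ξ t ⬝ᵥ (-(Lb *ᵥ q t)) := dotProduct_comm _ _
    have heq : (qd t ⬝ᵥ q t + q t ⬝ᵥ qd t +
        ((-(Lb *ᵥ q t)) ⬝ᵥ ξ t + ξ t ⬝ᵥ (-(Lb *ᵥ q t)))) / 2 = -(φ t) := by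
      rw [e1, e2, e3, e4]; ring
    exact heq ▸ h3
  have hEdiff : Differentiable ℝ E := fun t => (hE' t).differentiableAt
  have hanti : Antitone E := by
    refine antitone_of_deriv_nonpos hEdiff fun t => ?_
    rw [(hE' t).deriv, neg_nonpos]
    exact hnn (q t)
  have hE0 : ∀ t, 0 ≤ E t := by
    intro t
    have h1 := aux_dp_self_nonneg (q t)
    have h2 := aux_dp_self_nonneg (ξ t)
    simp only [hE]
    linarith
  have hqB : ∀ t, 0 ≤ t → q t ⬝ᵥ q t ≤ 2 * E 0 := by
    intro t ht
    have h1 : E t ≤ E 0 := hanti ht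
    have h2 := aux_dp_self_nonneg (ξ t)
    simp only [hE] at h1 ⊢
    linarith
  have hξB : ∀ t, 0 ≤ t → ξ t ⬝ᵥ ξ t ≤ 2 * E 0 := by
    intro t ht
    have h1 : E t ≤ E 0 := hanti ht
    have h2 := aux_dp_self_nonneg (q t)
    simp only [hE] at h1 ⊢
    linarith
  have hE00 : 0 ≤ E 0 := hE0 0
  -- derivative of g and its bound
  have hgd : ∀ t, HasDerivAt g (qd t ⬝ᵥ q t + q t ⬝ᵥ qd t) t :=
    fun t => aux_deriv_dp (hq' t) (hq' t)
  set Csq : ℝ := (2 * CM' + 2 * CL') * (2 * E 0) with hCsq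
  have hCsq0 : 0 ≤ Csq := by positivity
  set K : ℝ := max 1 (2 * Real.sqrt ((2 * E 0) * Csq)) with hKdef
  have hKpos : (0:ℝ) < K := lt_of_lt_of_le one_pos (le_max_left _ _)
  have hDgbound : ∀ t, 0 ≤ t → |qd t ⬝ᵥ q t + q t ⬝ᵥ qd t| ≤ K := by
    intro t ht
    have hq2 := hqB t ht
    have hξ2 := hξB t ht
    have hqd2 : qd t ⬝ᵥ qd t ≤ Csq := by
      have h1 : qd t ⬝ᵥ qd t ≤ 2 * ((-(M *ᵥ q t)) ⬝ᵥ (-(M *ᵥ q t)))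
          + 2 * ((Lb *ᵥ ξ t) ⬝ᵥ (Lb *ᵥ ξ t)) := by
        simp only [hqd]
        exact aux_dp_add_sq _ _
      have h2 : (-(M *ᵥ q t)) ⬝ᵥ (-(M *ᵥ q t)) = (M *ᵥ q t) ⬝ᵥ (M *ᵥ q t) := by
        simp
      rw [h2] at h1
      have h3 := hCM' (q t)
      have h4 := hCL' (ξ t)
      have h5 : CM' * (q t ⬝ᵥ q t) ≤ CM' * (2 * E 0) := by
        exact mul_le_mul_of_nonneg_left hq2 hCM0
      have h6 : CL' * (ξ t ⬝ᵥ ξ t) ≤ CL' * (2 * E 0) := by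
        exact mul_le_mul_of_nonneg_left hξ2 hCL0
      rw [hCsq]
      nlinarith
    have hcs := aux_cs (q t) (qd t)
    have h3 : (q t ⬝ᵥ qd t) ^ 2 ≤ (2 * E 0) * Csq := by
      have hq0 := aux_dp_self_nonneg (q t)
      have hqd0 := aux_dp_self_nonneg (qd t)
      nlinarith
    have hz : |q t ⬝ᵥ qd t| ≤ Real.sqrt ((2 * E 0) * Csq) := by
      calc |q t ⬝ᵥ qd t| = Real.sqrt ((q t ⬝ᵥ qd t) ^ 2) := (Real.sqrt_sq_eq_abs _).symm
        _ ≤ _ := Real.sqrt_le_sqrt h3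
    have e1 : qd t ⬝ᵥ q t = q t ⬝ᵥ qd t := dotProduct_comm _ _
    rw [e1, ← two_mul, abs_mul, abs_two]
    calc 2 * |q t ⬝ᵥ qd t| ≤ 2 * Real.sqrt ((2 * E 0) * Csq) := by linarith
      _ ≤ K := le_max_right _ _
  -- Lipschitz property of g on [0, ∞)
  have hlip : ∀ t s : ℝ, 0 ≤ t → t ≤ s → g t - K * (s - t) ≤ g s := by
    intro t s ht hts
    have hmvt := Convex.norm_image_sub_le_of_norm_hasDerivWithin_le
      (f := g) (f' := fun u => qd u ⬝ᵥ q u + q u ⬝ᵥ qd u) (s := Set.Ici (0:ℝ)) (C := K)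
      (fun u hu => (hgd u).hasDerivWithinAt)
      (fun u hu => by rw [Real.norm_eq_abs]; exact hDgbound u hu)
      (convex_Ici 0) (Set.mem_Ici.2 ht) (Set.mem_Ici.2 (ht.trans hts))
    rw [Real.norm_eq_abs, Real.norm_eq_abs, abs_of_nonneg (by linarith : (0:ℝ) ≤ s - t)] at hmvt
    have h1 := (abs_le.1 hmvt).1
    linarith
  -- integral bound
  have hφc : Continuous φ := by
    rw [hφ]
    exact (aux_cont_quad M).comp hqc
  have hgc : Continuous g := by
    rw [hg]
    have h := (aux_cont_quad (1 : Matrix (Fin n × Fin 2) (Fin n × Fin 2) ℝ)).comp hqc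
    simpa [Matrix.one_mulVec, Function.comp_def] using h
  have hint : ∀ t, 0 ≤ t → ∫ s in (0:ℝ)..t, g s ≤ E 0 / c := by
    intro t ht
    have hftc := intervalIntegral.integral_eq_sub_of_hasDerivAt
      (f := E) (f' := fun s => -(φ s)) (a := 0) (b := t)
      (fun s _ => hE' s) ((hφc.neg).intervalIntegrable _ _)
    have h1 : ∫ s in (0:ℝ)..t, φ s = E 0 - E t := by
      have hn := intervalIntegral.integral_neg (f := φ) (a := (0:ℝ)) (b := t)
        (μ := MeasureTheory.volume)
      rw [hn] at hftc
      linarith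
    have h2 : c * ∫ s in (0:ℝ)..t, g s ≤ ∫ s in (0:ℝ)..t, φ s := by
      rw [← intervalIntegral.integral_const_mul]
      refine intervalIntegral.integral_mono_on ht
        ((continuous_const.mul hgc).intervalIntegrable _ _) (hφc.intervalIntegrable _ _) fun s _ => ?_
      simp only [hg, hφ]
      exact hclow (q s)
    have h3 : E 0 - E t ≤ E 0 := by linarith [hE0 t]
    rw [le_div_iff₀ hc]
    calc (∫ s in (0:ℝ)..t, g s) * c = c * ∫ s in (0:ℝ)..t, g s := by ring
      _ ≤ ∫ s in (0:ℝ)..t, φ s := h2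
      _ = E 0 - E t := h1
      _ ≤ E 0 := h3
  have hgtend : Tendsto g atTop (nhds 0) :=
    aux_barbalat hKpos (fun t => aux_dp_self_nonneg (q t)) hgc hlip hint
  -- conclude coordinatewise
  rw [tendsto_pi_nhds]
  intro i
  have hb : ∀ t, ‖q t i‖ ≤ Real.sqrt (g t) := by
    intro t
    rw [Real.norm_eq_abs, ← Real.sqrt_mul_self_eq_abs]
    refine Real.sqrt_le_sqrt ?_
    simp only [hg]
    exact Finset.single_le_sum (fun j _ => mul_self_nonneg (q t j)) (Finset.mem_univ i)
  have hsq : Tendsto (fun t => Real.sqrt (g t)) atTop (nhds 0) := by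
    have h := (Real.continuous_sqrt.tendsto 0).comp hgtend
    simpa [Function.comp_def] using h
  have := squeeze_zero_norm hb hsq
  simpa using this
end
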